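/- For the blown-up system dx/dt = x(S(1-x)(A+xy) + x(M-xy)(xy-1)(A+xy) - Qxy), dy/dt = S(x-1)(xy+A)y with A, M, Q, S > 0, the point (μ, 0) with μ = S/(S+M) is an equilibrium, and its Jacobian is upper triangular with eigenvalues -AS and -AMS/(M+S), both negative; hence (μ,0) is a hyperbolic attractor. -/

import Mathlib

/-- The point (μ,0), μ = S/(S+M), is an equilibrium of the blown-up system; its
Jacobian is upper triangular with negative eigenvalues -AS and -AMS/(M+S), so
(μ,0) is a hyperbolic attractor. -/
theorem blowup_mu_attractor (A M Q S : ℝ)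
    (hA : 0 < A) (hM : 0 < M) (hQ : 0 < Q) (hS : 0 < S) :
    (fun p : ℝ × ℝ =>
        (p.1 * (S * (1 - p.1) * (A + p.1 * p.2)
            + p.1 * (M - p.1 * p.2) * (p.1 * p.2 - 1) * (A + p.1 * p.2)
            - Q * p.1 * p.2),
         S * (p.1 - 1) * (p.1 * p.2 + A) * p.2)) (S / (S + M), 0) = (0, 0) ∧
    (fderiv ℝ (fun p : ℝ × ℝ =>
        (p.1 * (S * (1 - p.1) * (A + p.1 * p.2)
            + p.1 * (M - p.1 * p.2) * (p.1 * p.2 - 1) * (A + p.1 * p.2)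
            - Q * p.1 * p.2),
         S * (p.1 - 1) * (p.1 * p.2 + A) * p.2)) (S / (S + M), 0)) (1, 0)
      = (-(A * S), 0) ∧
    ((fderiv ℝ (fun p : ℝ × ℝ =>
        (p.1 * (S * (1 - p.1) * (A + p.1 * p.2)
            + p.1 * (M - p.1 * p.2) * (p.1 * p.2 - 1) * (A + p.1 * p.2)
            - Q * p.1 * p.2),
         S * (p.1 - 1) * (p.1 * p.2 + A) * p.2)) (S / (S + M), 0)) (0, 1)).2
      = -(A * M * S / (M + S)) ∧
    -(A * S) < 0 ∧ -(A * M * S / (M + S)) < 0 := by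
  have hSM : S + M ≠ 0 := by positivity
  set pt : ℝ × ℝ := (S / (S + M), 0) with hpt
  have hx : HasFDerivAt (fun p : ℝ × ℝ => p.1)
      (ContinuousLinearMap.fst ℝ ℝ ℝ) pt := hasFDerivAt_fst
  have hy : HasFDerivAt (fun p : ℝ × ℝ => p.2)
      (ContinuousLinearMap.snd ℝ ℝ ℝ) pt := hasFDerivAt_snd
  have hxy := hx.mul hy
  have hf1 := hx.mul ((((((hx.const_sub 1).const_mul S).mul (hxy.const_add A)).add
      (((hx.mul (hxy.const_sub M)).mul (hxy.sub_const 1)).mul (hxy.const_add A))).sub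
      ((hx.const_mul Q).mul hy)))
  have hf2 := (((hx.sub_const 1).const_mul S).mul (hxy.add_const A)).mul hy
  have H := HasFDerivAt.prodMk hf1 hf2
  have hF : fderiv ℝ (fun p : ℝ × ℝ =>
        (p.1 * (S * (1 - p.1) * (A + p.1 * p.2)
            + p.1 * (M - p.1 * p.2) * (p.1 * p.2 - 1) * (A + p.1 * p.2)
            - Q * p.1 * p.2),
         S * (p.1 - 1) * (p.1 * p.2 + A) * p.2)) pt = _ := H.fderiv
  refine ⟨?_, ?_, ?_, ?_, ?_⟩
  · simp only [hpt]
    refine Prod.ext ?_ ?_ <;> simp <;> field_simp <;> ring_nf <;> simp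
  · rw [hF]
    simp only [ContinuousLinearMap.add_apply, ContinuousLinearMap.smul_apply,
      ContinuousLinearMap.sub_apply, ContinuousLinearMap.prod_apply,
      ContinuousLinearMap.coe_fst', ContinuousLinearMap.coe_snd', hpt,
      ContinuousLinearMap.neg_apply, smul_eq_mul]
    refine Prod.ext ?_ ?_ <;> simp <;> field_simp <;> ring
  · rw [hF]
    simp only [ContinuousLinearMap.add_apply, ContinuousLinearMap.smul_apply,
      ContinuousLinearMap.sub_apply, ContinuousLinearMap.prod_apply,
      ContinuousLinearMap.coe_fst', ContinuousLinearMap.coe_snd', hpt,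
      ContinuousLinearMap.neg_apply, smul_eq_mul]
    simp
    field_simp
    ring
  · nlinarith
  · have : 0 < A * M * S / (M + S) := by positivity
    linarith
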